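/- Let R be a finite additive split semiring and let (!, p, d, c, w, c̄, w̄) be an R-graded additive bialgebra modality on an additive symmetric monoidal category L with finite biproducts ⊕ (with projections π, injections ι) and zero object 0. For each r ∈ R define χ⊗_r : !_r(A ⊕ B) → ⊕_{s+t=r} (!_s A ⊗ !_t B) by χ⊗_r = Σ_{s+t=r} c_{s,t} ; (!_s(π₀) ⊗ !_t(π₁)) ; ι_{s,t}, and define χI := w : !_0 0 → I. Then χ⊗_r and χI are natural isomorphisms (the graded Seely isomorphisms !_r(A ⊕ B) ≅ ⊕_{s+t=r} !_s A ⊗ !_t B and !_0 0 ≅ I), with inverses (χ⊗_r)⁻¹ = Σ_{s+t=r} π_{s,t} ; (!_s(ι₀) ⊗ !_t(ι₁)) ; c̄_{s,t} and (χI)⁻¹ = w̄. -/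

import Mathlib

open CategoryTheory MonoidalCategory Limits

universe v u

/-- An additive symmetric monoidal category: homs are commutative monoids and
composition and the monoidal product preserve sums and zero maps. -/
class AdditiveMonoidal (C : Type u) [Category.{v} C] [MonoidalCategory C]
    [∀ X Y : C, AddCommMonoid (X ⟶ Y)] : Prop where
  add_comp : ∀ {X Y Z : C} (f g : X ⟶ Y) (h : Y ⟶ Z), (f + g) ≫ h = f ≫ h + g ≫ h
  comp_add : ∀ {X Y Z : C} (f : X ⟶ Y) (g h : Y ⟶ Z), f ≫ (g + h) = f ≫ g + f ≫ h
  zero_comp : ∀ {X Y Z : C} (g : Y ⟶ Z), (0 : X ⟶ Y) ≫ g = 0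
  comp_zero : ∀ {X Y Z : C} (f : X ⟶ Y), f ≫ (0 : Y ⟶ Z) = 0
  add_tensor : ∀ {X Y Z W : C} (f g : X ⟶ Y) (h : Z ⟶ W), (f + g) ⊗ₘ h = f ⊗ₘ h + g ⊗ₘ h
  tensor_add : ∀ {X Y Z W : C} (f : X ⟶ Y) (g h : Z ⟶ W), f ⊗ₘ (g + h) = f ⊗ₘ g + f ⊗ₘ h
  zero_tensor : ∀ {X Y Z W : C} (h : Z ⟶ W), (0 : X ⟶ Y) ⊗ₘ h = 0
  tensor_zero : ∀ {X Y Z W : C} (f : X ⟶ Y), f ⊗ₘ (0 : Z ⟶ W) = 0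

/-- A finite additive split (f.a.s.) semiring. -/
class FAS (R : Type) [Semiring R] : Prop where
  finite_antidiag : ∀ r : R, {q : R × R | q.1 + q.2 = r}.Finite
  add_eq_zero : ∀ {s t : R}, s + t = 0 → s = 0 ∧ t = 0
  add_eq_one : ∀ {s t : R}, s + t = 1 → (s = 1 ∧ t = 0) ∨ (s = 0 ∧ t = 1)
  add_cancel : ∀ {r s t : R}, r + s = r + t → s = t

variable {R : Type} [Semiring R]
variable {C : Type u} [Category.{v} C] [MonoidalCategory C] [SymmetricCategory C]

/-- The canonical identification `!_r A ⟶ !_s A` coming from an equality `r = s` of grades. -/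
def bc (bang : R → C ⥤ C) {r s : R} (h : r = s) (A : C) :
    (bang r).obj A ⟶ (bang s).obj A :=
  eqToHom (congrArg (fun t => (bang t).obj A) h)

variable [∀ X Y : C, AddCommMonoid (X ⟶ Y)]

/-- `(bang, p, c, d, w)` is an `R`-graded coalgebra modality. -/
structure IsGradedCoalgebraModality (bang : R → C ⥤ C)
    (p : ∀ (r s : R) (A : C), (bang (r * s)).obj A ⟶ (bang r).obj ((bang s).obj A))
    (c : ∀ (r s : R) (A : C), (bang (r + s)).obj A ⟶ (bang r).obj A ⊗ (bang s).obj A)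
    (d : ∀ A : C, (bang 1).obj A ⟶ A)
    (w : ∀ A : C, (bang 0).obj A ⟶ 𝟙_ C) : Prop where
  p_natural : ∀ (r s : R) {A B : C} (f : A ⟶ B),
    (bang (r * s)).map f ≫ p r s B = p r s A ≫ (bang r).map ((bang s).map f)
  c_natural : ∀ (r s : R) {A B : C} (f : A ⟶ B),
    (bang (r + s)).map f ≫ c r s B = c r s A ≫ ((bang r).map f ⊗ₘ (bang s).map f)
  d_natural : ∀ {A B : C} (f : A ⟶ B), (bang 1).map f ≫ d B = d A ≫ f
  w_natural : ∀ {A B : C} (f : A ⟶ B), (bang 0).map f ≫ w B = w A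
  p_counit_left : ∀ (r : R) (A : C),
    p 1 r A ≫ d ((bang r).obj A) = bc bang (one_mul r) A
  p_counit_right : ∀ (r : R) (A : C),
    p r 1 A ≫ (bang r).map (d A) = bc bang (mul_one r) A
  p_coassoc : ∀ (r s t : R) (A : C),
    p (r * s) t A ≫ p r s ((bang t).obj A)
      = bc bang (mul_assoc r s t) A ≫ p r (s * t) A ≫ (bang r).map (p s t A)
  c_coassoc : ∀ (r s t : R) (A : C),
    c (r + s) t A ≫ (c r s A ⊗ₘ 𝟙 ((bang t).obj A)) ≫ (α_ _ _ _).hom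
      = bc bang (add_assoc r s t) A ≫ c r (s + t) A ≫ (𝟙 ((bang r).obj A) ⊗ₘ c s t A)
  c_counit_right : ∀ (r : R) (A : C),
    c r 0 A ≫ (𝟙 ((bang r).obj A) ⊗ₘ w A) ≫ (ρ_ _).hom = bc bang (add_zero r) A
  c_counit_left : ∀ (r : R) (A : C),
    c 0 r A ≫ (w A ⊗ₘ 𝟙 ((bang r).obj A)) ≫ (λ_ _).hom = bc bang (zero_add r) A
  c_cocomm : ∀ (r s : R) (A : C),
    c r s A ≫ (β_ _ _).hom = bc bang (add_comm r s) A ≫ c s r A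
  p_comonoid : ∀ (r s t : R) (A : C),
    p (r + s) t A ≫ c r s ((bang t).obj A)
      = bc bang (add_mul r s t) A ≫ c (r * t) (s * t) A ≫ (p r t A ⊗ₘ p s t A)
  p_w : ∀ (r : R) (A : C),
    p 0 r A ≫ w ((bang r).obj A) = bc bang (zero_mul r) A ≫ w A

variable [DecidableEq R]

/-- `(bang, p, c, d, w, cb, wb)` is an `R`-graded additive bialgebra modality. -/
structure IsGradedAdditiveBialgebraModality (bang : R → C ⥤ C)
    (p : ∀ (r s : R) (A : C), (bang (r * s)).obj A ⟶ (bang r).obj ((bang s).obj A))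
    (c : ∀ (r s : R) (A : C), (bang (r + s)).obj A ⟶ (bang r).obj A ⊗ (bang s).obj A)
    (d : ∀ A : C, (bang 1).obj A ⟶ A)
    (w : ∀ A : C, (bang 0).obj A ⟶ 𝟙_ C)
    (cb : ∀ (r s : R) (A : C), (bang r).obj A ⊗ (bang s).obj A ⟶ (bang (r + s)).obj A)
    (wb : ∀ A : C, 𝟙_ C ⟶ (bang 0).obj A) : Prop where
  toCoalgebra : IsGradedCoalgebraModality bang p c d w
  cb_natural : ∀ (r s : R) {A B : C} (f : A ⟶ B),
    ((bang r).map f ⊗ₘ (bang s).map f) ≫ cb r s B = cb r s A ≫ (bang (r + s)).map f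
  wb_natural : ∀ {A B : C} (f : A ⟶ B), wb A ≫ (bang 0).map f = wb B
  cb_assoc : ∀ (r s t : R) (A : C),
    (cb r s A ⊗ₘ 𝟙 ((bang t).obj A)) ≫ cb (r + s) t A
      = (α_ _ _ _).hom ≫ (𝟙 ((bang r).obj A) ⊗ₘ cb s t A) ≫ cb r (s + t) A
          ≫ bc bang (add_assoc r s t).symm A
  cb_unit_left : ∀ (r : R) (A : C),
    (wb A ⊗ₘ 𝟙 ((bang r).obj A)) ≫ cb 0 r A
      = (λ_ ((bang r).obj A)).hom ≫ bc bang (zero_add r).symm A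
  cb_unit_right : ∀ (r : R) (A : C),
    (𝟙 ((bang r).obj A) ⊗ₘ wb A) ≫ cb r 0 A
      = (ρ_ ((bang r).obj A)).hom ≫ bc bang (add_zero r).symm A
  cb_comm : ∀ (r s : R) (A : C),
    (β_ _ _).hom ≫ cb s r A = cb r s A ≫ bc bang (add_comm r s) A
  bimonoid : ∀ (r s t u : R) (h : r + s = t + u) (A : C),
    cb r s A ≫ bc bang h A ≫ c t u A
      = ∑ᶠ (q : {q : (R × R) × (R × R) //
            q.1.1 + q.1.2 = r ∧ q.2.1 + q.2.2 = s ∧ q.1.1 + q.2.1 = t ∧ q.1.2 + q.2.2 = u}),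
          ((bc bang q.2.1.symm A ≫ c q.1.1.1 q.1.1.2 A)
              ⊗ₘ (bc bang q.2.2.1.symm A ≫ c q.1.2.1 q.1.2.2 A))
            ≫ tensorμ _ _ _ _
            ≫ ((cb q.1.1.1 q.1.2.1 A ≫ bc bang q.2.2.2.1 A)
                ⊗ₘ (cb q.1.1.2 q.1.2.2 A ≫ bc bang q.2.2.2.2 A))
  wb_w : ∀ A : C, wb A ≫ w A = 𝟙 (𝟙_ C)
  wb_c : ∀ A : C,
    wb A ≫ bc bang (add_zero (0 : R)).symm A ≫ c 0 0 A = (λ_ (𝟙_ C)).inv ≫ (wb A ⊗ₘ wb A)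
  cb_w : ∀ A : C,
    cb 0 0 A ≫ bc bang (add_zero (0 : R)) A ≫ w A = (w A ⊗ₘ w A) ≫ (λ_ (𝟙_ C)).hom
  cb_d : ∀ (r s : R) (h : r + s = 1) (A : C),
    cb r s A ≫ bc bang h A ≫ d A
      = (if hr : r = 0 then
          (bc bang hr A ⊗ₘ bc bang (show s = 1 by rw [hr, zero_add] at h; exact h) A)
            ≫ (w A ⊗ₘ d A) ≫ (λ_ A).hom
         else 0)
        + (if hs : s = 0 then
          (bc bang (show r = 1 by rw [hs, add_zero] at h; exact h) A ⊗ₘ bc bang hs A)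
            ≫ (d A ⊗ₘ w A) ≫ (ρ_ A).hom
         else 0)
  map_add : ∀ (r : R) {A B : C} (f g : A ⟶ B),
    (bang r).map (f + g)
      = ∑ᶠ (q : {q : R × R // q.1 + q.2 = r}),
          bc bang q.2.symm A ≫ c q.1.1 q.1.2 A
            ≫ ((bang q.1.1).map f ⊗ₘ (bang q.1.2).map g)
            ≫ cb q.1.1 q.1.2 B ≫ bc bang q.2 B
  map_zero : ∀ (r : R) {A B : C},
    (bang r).map (0 : A ⟶ B)
      = if hr : r = 0 then bc bang hr A ≫ w A ≫ wb B ≫ bc bang hr.symm B else 0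


/-- The graded Seely map `χ⊗_r : !_r(A ⊕ B) ⟶ ⊕_{s+t=r} !_s A ⊗ !_t B`, defined as
`Σ_{s+t=r} c_{s,t} ; (!_s(π₀) ⊗ !_t(π₁)) ; ι_{s,t}`. -/
noncomputable def seelyMap (bang : R → C ⥤ C)
    (c : ∀ (r s : R) (A : C), (bang (r + s)).obj A ⟶ (bang r).obj A ⊗ (bang s).obj A)
    (bp : C → C → C) (pr₀ : ∀ A B : C, bp A B ⟶ A) (pr₁ : ∀ A B : C, bp A B ⟶ B)
    (bb : R → C → C → C)
    (J : ∀ (r : R) (A B : C) (x : {q : R × R // q.1 + q.2 = r}),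
      (bang x.1.1).obj A ⊗ (bang x.1.2).obj B ⟶ bb r A B)
    (r : R) (A B : C) : (bang r).obj (bp A B) ⟶ bb r A B :=
  ∑ᶠ (x : {q : R × R // q.1 + q.2 = r}),
    bc bang x.2.symm (bp A B) ≫ c x.1.1 x.1.2 (bp A B)
      ≫ ((bang x.1.1).map (pr₀ A B) ⊗ₘ (bang x.1.2).map (pr₁ A B)) ≫ J r A B x

/-- The inverse graded Seely map `Σ_{s+t=r} π_{s,t} ; (!_s(ι₀) ⊗ !_t(ι₁)) ; c̄_{s,t}`. -/
noncomputable def seelyInv (bang : R → C ⥤ C)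
    (cb : ∀ (r s : R) (A : C), (bang r).obj A ⊗ (bang s).obj A ⟶ (bang (r + s)).obj A)
    (bp : C → C → C) (in₀ : ∀ A B : C, A ⟶ bp A B) (in₁ : ∀ A B : C, B ⟶ bp A B)
    (bb : R → C → C → C)
    (P : ∀ (r : R) (A B : C) (x : {q : R × R // q.1 + q.2 = r}),
      bb r A B ⟶ (bang x.1.1).obj A ⊗ (bang x.1.2).obj B)
    (r : R) (A B : C) : bb r A B ⟶ (bang r).obj (bp A B) :=
  ∑ᶠ (x : {q : R × R // q.1 + q.2 = r}),
    P r A B x ≫ ((bang x.1.1).map (in₀ A B) ⊗ₘ (bang x.1.2).map (in₁ A B))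
      ≫ cb x.1.1 x.1.2 (bp A B) ≫ bc bang x.2 (bp A B)

section SeelyAux
set_option linter.unusedSectionVars false
variable [FAS R] [AdditiveMonoidal C]

lemma tensorμ_unit_unit (X Y : C) : tensorμ X (𝟙_ C) (𝟙_ C) Y = 𝟙 _ := by
  rw [tensorμ]
  rw [show (β_ (𝟙_ C) (𝟙_ C)).hom = 𝟙 _ by
    simp; rw [← unitors_equal]; exact (λ_ _).hom_inv_id]
  coherence

lemma eqToHom_self {X : C} (h : X = X) : eqToHom h = 𝟙 X := rfl

/-- postcomposition as an `AddMonoidHom`. -/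
def precompHom {X Y Z : C} (h : Y ⟶ Z) : (X ⟶ Y) →+ (X ⟶ Z) where
  toFun f := f ≫ h
  map_zero' := AdditiveMonoidal.zero_comp h
  map_add' f g := AdditiveMonoidal.add_comp f g h

/-- precomposition as an `AddMonoidHom`. -/
def postcompHom {X Y Z : C} (f : X ⟶ Y) : (Y ⟶ Z) →+ (X ⟶ Z) where
  toFun g := f ≫ g
  map_zero' := AdditiveMonoidal.comp_zero f
  map_add' := AdditiveMonoidal.comp_add f

lemma fsum_comp {ι : Type} [Finite ι] {X Y Z : C} (f : ι → (X ⟶ Y)) (h : Y ⟶ Z) :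
    (∑ᶠ i, f i) ≫ h = ∑ᶠ i, f i ≫ h :=
  (precompHom h).map_finsum (Set.toFinite _)

lemma comp_fsum {ι : Type} [Finite ι] {X Y Z : C} (f : X ⟶ Y) (g : ι → (Y ⟶ Z)) :
    f ≫ (∑ᶠ i, g i) = ∑ᶠ i, f ≫ g i :=
  (postcompHom f).map_finsum (Set.toFinite _)

lemma bc_refl (bang : R → C ⥤ C) {r : R} (h : r = r) (A : C) : bc bang h A = 𝟙 _ := rfl

lemma bc_bc (bang : R → C ⥤ C) {r s t : R} (h : r = s) (h' : s = t) (A : C) :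
    bc bang h A ≫ bc bang h' A = bc bang (h.trans h') A := by
  subst h h'; rw [bc_refl, Category.id_comp]

lemma bc_map (bang : R → C ⥤ C) {r s : R} (h : r = s) {A B : C} (f : A ⟶ B) :
    bc bang h A ≫ (bang s).map f = (bang r).map f ≫ bc bang h B := by
  subst h; rw [bc_refl, bc_refl, Category.id_comp, Category.comp_id]

lemma finite_antidiag (r : R) : Finite {q : R × R // q.1 + q.2 = r} :=
  (FAS.finite_antidiag r).to_subtype

lemma finite_Q (s t s' t' : R) :
    Finite {q : (R × R) × (R × R) //
      q.1.1 + q.1.2 = s ∧ q.2.1 + q.2.2 = t ∧ q.1.1 + q.2.1 = s' ∧ q.1.2 + q.2.2 = t'} := by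
  haveI : Finite {a : R × R // a.1 + a.2 = s} := (FAS.finite_antidiag s).to_subtype
  haveI : Finite {a : R × R // a.1 + a.2 = t} := (FAS.finite_antidiag t).to_subtype
  apply Finite.of_injective
    (f := fun q => ((⟨q.1.1, q.2.1⟩ : {a : R × R // a.1 + a.2 = s}),
      (⟨q.1.2, q.2.2.1⟩ : {a : R × R // a.1 + a.2 = t})))
  intro q q' h
  have h1 : q.1.1 = q'.1.1 := congrArg (fun z => z.1.1) h
  have h2 : q.1.2 = q'.1.2 := congrArg (fun z => z.2.1) h
  exact Subtype.ext (Prod.ext h1 h2)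

variable (bang : R → C ⥤ C)
    (p : ∀ (r s : R) (A : C), (bang (r * s)).obj A ⟶ (bang r).obj ((bang s).obj A))
    (c : ∀ (r s : R) (A : C), (bang (r + s)).obj A ⟶ (bang r).obj A ⊗ (bang s).obj A)
    (d : ∀ A : C, (bang 1).obj A ⟶ A)
    (w : ∀ A : C, (bang 0).obj A ⟶ 𝟙_ C)
    (cb : ∀ (r s : R) (A : C), (bang r).obj A ⊗ (bang s).obj A ⟶ (bang (r + s)).obj A)
    (wb : ∀ A : C, 𝟙_ C ⟶ (bang 0).obj A)
    (bp : C → C → C)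
    (pr₀ : ∀ A B : C, bp A B ⟶ A) (pr₁ : ∀ A B : C, bp A B ⟶ B)
    (in₀ : ∀ A B : C, A ⟶ bp A B) (in₁ : ∀ A B : C, B ⟶ bp A B)

lemma key_term_reduce
    (hmod : IsGradedAdditiveBialgebraModality bang p c d w cb wb)
    (h00 : ∀ A B : C, in₀ A B ≫ pr₀ A B = 𝟙 A) (h01 : ∀ A B : C, in₀ A B ≫ pr₁ A B = 0)
    (h10 : ∀ A B : C, in₁ A B ≫ pr₀ A B = 0) (h11 : ∀ A B : C, in₁ A B ≫ pr₁ A B = 𝟙 B)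
    {s t s' t' : R} (A B : C)
    (a b e f : R) (hab : a + b = s) (hef : e + f = t) (hae : a + e = s') (hbf : b + f = t') :
    ((bang s).map (in₀ A B) ⊗ₘ (bang t).map (in₁ A B)) ≫
      (((bc bang hab.symm (bp A B) ≫ c a b (bp A B)) ⊗ₘ
          (bc bang hef.symm (bp A B) ≫ c e f (bp A B))) ≫
        tensorμ _ _ _ _ ≫
        ((cb a e (bp A B) ≫ bc bang hae (bp A B)) ⊗ₘ
          (cb b f (bp A B) ≫ bc bang hbf (bp A B)))) ≫
      ((bang s').map (pr₀ A B) ⊗ₘ (bang t').map (pr₁ A B))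
    = ((bc bang hab.symm A ≫ c a b A) ⊗ₘ (bc bang hef.symm B ≫ c e f B)) ≫
        tensorμ _ _ _ _ ≫
        (((𝟙 ((bang a).obj A) ⊗ₘ (bang e).map (0 : B ⟶ A)) ≫ cb a e A ≫ bc bang hae A) ⊗ₘ
          (((bang b).map (0 : A ⟶ B) ⊗ₘ 𝟙 ((bang f).obj B)) ≫ cb b f B ≫ bc bang hbf B)) := by
  have e1 : (bang s).map (in₀ A B) ≫ bc bang hab.symm (bp A B) ≫ c a b (bp A B)
      = bc bang hab.symm A ≫ c a b A ≫ ((bang a).map (in₀ A B) ⊗ₘ (bang b).map (in₀ A B)) := by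
    rw [← Category.assoc, ← bc_map, Category.assoc, hmod.toCoalgebra.c_natural]
  have e2 : (bang t).map (in₁ A B) ≫ bc bang hef.symm (bp A B) ≫ c e f (bp A B)
      = bc bang hef.symm B ≫ c e f B ≫ ((bang e).map (in₁ A B) ⊗ₘ (bang f).map (in₁ A B)) := by
    rw [← Category.assoc, ← bc_map, Category.assoc, hmod.toCoalgebra.c_natural]
  have e3 : cb a e (bp A B) ≫ bc bang hae (bp A B) ≫ (bang s').map (pr₀ A B)
      = ((bang a).map (pr₀ A B) ⊗ₘ (bang e).map (pr₀ A B)) ≫ cb a e A ≫ bc bang hae A := by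
    rw [bc_map, ← Category.assoc, ← hmod.cb_natural, Category.assoc]
  have e4 : cb b f (bp A B) ≫ bc bang hbf (bp A B) ≫ (bang t').map (pr₁ A B)
      = ((bang b).map (pr₁ A B) ⊗ₘ (bang f).map (pr₁ A B)) ≫ cb b f B ≫ bc bang hbf B := by
    rw [bc_map, ← Category.assoc, ← hmod.cb_natural, Category.assoc]
  calc _ = (((bang s).map (in₀ A B) ≫ bc bang hab.symm (bp A B) ≫ c a b (bp A B)) ⊗ₘ
            ((bang t).map (in₁ A B) ≫ bc bang hef.symm (bp A B) ≫ c e f (bp A B))) ≫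
           tensorμ _ _ _ _ ≫
           ((cb a e (bp A B) ≫ bc bang hae (bp A B) ≫ (bang s').map (pr₀ A B)) ⊗ₘ
            (cb b f (bp A B) ≫ bc bang hbf (bp A B) ≫ (bang t').map (pr₁ A B))) := by
        simp only [← tensorHom_comp_tensorHom, Category.assoc]
    _ = ((bc bang hab.symm A ≫ c a b A) ⊗ₘ (bc bang hef.symm B ≫ c e f B)) ≫
        ((((bang a).map (in₀ A B) ⊗ₘ (bang b).map (in₀ A B)) ⊗ₘ
         ((bang e).map (in₁ A B) ⊗ₘ (bang f).map (in₁ A B))) ≫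
        tensorμ _ _ _ _) ≫
        ((((bang a).map (pr₀ A B) ⊗ₘ (bang e).map (pr₀ A B)) ≫ cb a e A ≫ bc bang hae A) ⊗ₘ
         (((bang b).map (pr₁ A B) ⊗ₘ (bang f).map (pr₁ A B)) ≫ cb b f B ≫ bc bang hbf B)) := by
        rw [e1, e2, e3, e4]; simp only [← tensorHom_comp_tensorHom, Category.assoc]
    _ = ((bc bang hab.symm A ≫ c a b A) ⊗ₘ (bc bang hef.symm B ≫ c e f B)) ≫
        tensorμ _ _ _ _ ≫
        ((((bang a).map (in₀ A B ≫ pr₀ A B) ⊗ₘ (bang e).map (in₁ A B ≫ pr₀ A B)) ≫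
            cb a e A ≫ bc bang hae A) ⊗ₘ
         (((bang b).map (in₀ A B ≫ pr₁ A B) ⊗ₘ (bang f).map (in₁ A B ≫ pr₁ A B)) ≫
            cb b f B ≫ bc bang hbf B)) := by
        rw [tensorμ_natural]
        simp only [Category.assoc, tensorHom_comp_tensorHom_assoc, tensorHom_comp_tensorHom, ← Functor.map_comp]
    _ = _ := by
        rw [h00, h01, h10, h11, CategoryTheory.Functor.map_id, CategoryTheory.Functor.map_id]

lemma key_term_zero
    (hmod : IsGradedAdditiveBialgebraModality bang p c d w cb wb)
    (h00 : ∀ A B : C, in₀ A B ≫ pr₀ A B = 𝟙 A) (h01 : ∀ A B : C, in₀ A B ≫ pr₁ A B = 0)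
    (h10 : ∀ A B : C, in₁ A B ≫ pr₀ A B = 0) (h11 : ∀ A B : C, in₁ A B ≫ pr₁ A B = 𝟙 B)
    {s t s' t' : R} (A B : C)
    (a b e f : R) (hab : a + b = s) (hef : e + f = t) (hae : a + e = s') (hbf : b + f = t')
    (hbe : ¬(b = 0 ∧ e = 0)) :
    ((bang s).map (in₀ A B) ⊗ₘ (bang t).map (in₁ A B)) ≫
      (((bc bang hab.symm (bp A B) ≫ c a b (bp A B)) ⊗ₘ
          (bc bang hef.symm (bp A B) ≫ c e f (bp A B))) ≫
        tensorμ _ _ _ _ ≫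
        ((cb a e (bp A B) ≫ bc bang hae (bp A B)) ⊗ₘ
          (cb b f (bp A B) ≫ bc bang hbf (bp A B)))) ≫
      ((bang s').map (pr₀ A B) ⊗ₘ (bang t').map (pr₁ A B)) = 0 := by
  rw [key_term_reduce bang p c d w cb wb bp pr₀ pr₁ in₀ in₁ hmod h00 h01 h10 h11 A B
    a b e f hab hef hae hbf]
  by_cases hb : b = 0
  · have he : ¬ e = 0 := fun h' => hbe ⟨hb, h'⟩
    rw [hmod.map_zero e, dif_neg he]
    simp only [AdditiveMonoidal.tensor_zero, AdditiveMonoidal.zero_tensor,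
      AdditiveMonoidal.zero_comp, AdditiveMonoidal.comp_zero]
  · rw [hmod.map_zero b, dif_neg hb]
    simp only [AdditiveMonoidal.tensor_zero, AdditiveMonoidal.zero_tensor,
      AdditiveMonoidal.zero_comp, AdditiveMonoidal.comp_zero]

lemma key_term_id
    (hmod : IsGradedAdditiveBialgebraModality bang p c d w cb wb)
    (h00 : ∀ A B : C, in₀ A B ≫ pr₀ A B = 𝟙 A) (h01 : ∀ A B : C, in₀ A B ≫ pr₁ A B = 0)
    (h10 : ∀ A B : C, in₁ A B ≫ pr₀ A B = 0) (h11 : ∀ A B : C, in₁ A B ≫ pr₁ A B = 𝟙 B)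
    (s t : R) (A B : C)
    (hab : s + 0 = s) (hef : 0 + t = t) (hae : s + 0 = s) (hbf : 0 + t = t) :
    ((bang s).map (in₀ A B) ⊗ₘ (bang t).map (in₁ A B)) ≫
      (((bc bang hab.symm (bp A B) ≫ c s 0 (bp A B)) ⊗ₘ
          (bc bang hef.symm (bp A B) ≫ c 0 t (bp A B))) ≫
        tensorμ _ _ _ _ ≫
        ((cb s 0 (bp A B) ≫ bc bang hae (bp A B)) ⊗ₘ
          (cb 0 t (bp A B) ≫ bc bang hbf (bp A B)))) ≫
      ((bang s).map (pr₀ A B) ⊗ₘ (bang t).map (pr₁ A B))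
    = 𝟙 ((bang s).obj A ⊗ (bang t).obj B) := by
  rw [key_term_reduce bang p c d w cb wb bp pr₀ pr₁ in₀ in₁ hmod h00 h01 h10 h11 A B
    s 0 0 t hab hef hae hbf]
  rw [hmod.map_zero 0 (A := B) (B := A), dif_pos rfl,
    hmod.map_zero 0 (A := A) (B := B), dif_pos rfl]
  simp only [bc_refl, Category.id_comp, Category.comp_id]
  have f1 : (𝟙 ((bang s).obj A) ⊗ₘ (w B ≫ wb A)) ≫ cb s 0 A ≫ bc bang hae A
      = (𝟙 ((bang s).obj A) ⊗ₘ w B) ≫ (ρ_ ((bang s).obj A)).hom := by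
    rw [show (𝟙 ((bang s).obj A) ⊗ₘ (w B ≫ wb A))
        = (𝟙 ((bang s).obj A) ⊗ₘ w B) ≫ (𝟙 ((bang s).obj A) ⊗ₘ wb A) by
      rw [tensorHom_comp_tensorHom, Category.comp_id]]
    rw [Category.assoc, ← Category.assoc (𝟙 _ ⊗ₘ wb A), hmod.cb_unit_right,
      Category.assoc, bc_bc, bc_refl, Category.comp_id]
  have f2 : ((w A ≫ wb B) ⊗ₘ 𝟙 ((bang t).obj B)) ≫ cb 0 t B ≫ bc bang hbf B
      = (w A ⊗ₘ 𝟙 ((bang t).obj B)) ≫ (λ_ ((bang t).obj B)).hom := by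
    rw [show ((w A ≫ wb B) ⊗ₘ 𝟙 ((bang t).obj B))
        = (w A ⊗ₘ 𝟙 ((bang t).obj B)) ≫ (wb B ⊗ₘ 𝟙 ((bang t).obj B)) by
      rw [tensorHom_comp_tensorHom, Category.comp_id]]
    rw [Category.assoc, ← Category.assoc (wb B ⊗ₘ 𝟙 _), hmod.cb_unit_left,
      Category.assoc, bc_bc, bc_refl, Category.comp_id]
  rw [f1, f2]
  rw [show tensorμ ((bang s).obj A) ((bang 0).obj A) ((bang 0).obj B) ((bang t).obj B) ≫
        ((𝟙 ((bang s).obj A) ⊗ₘ w B) ≫ (ρ_ ((bang s).obj A)).hom ⊗ₘ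
          (w A ⊗ₘ 𝟙 ((bang t).obj B)) ≫ (λ_ ((bang t).obj B)).hom)
      = ((𝟙 ((bang s).obj A) ⊗ₘ w A) ⊗ₘ (w B ⊗ₘ 𝟙 ((bang t).obj B))) ≫
          tensorμ ((bang s).obj A) (𝟙_ C) (𝟙_ C) ((bang t).obj B) ≫
          ((ρ_ ((bang s).obj A)).hom ⊗ₘ (λ_ ((bang t).obj B)).hom) by
    rw [← tensorHom_comp_tensorHom, ← Category.assoc, ← tensorμ_natural, Category.assoc]]
  rw [tensorμ_unit_unit, Category.id_comp]
  simp only [tensorHom_comp_tensorHom, Category.assoc]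
  rw [hmod.toCoalgebra.c_counit_right, hmod.toCoalgebra.c_counit_left]
  simp only [bc_bc, bc_refl, id_tensorHom_id]

lemma seely_key
    (hmod : IsGradedAdditiveBialgebraModality bang p c d w cb wb)
    (h00 : ∀ A B : C, in₀ A B ≫ pr₀ A B = 𝟙 A) (h01 : ∀ A B : C, in₀ A B ≫ pr₁ A B = 0)
    (h10 : ∀ A B : C, in₁ A B ≫ pr₀ A B = 0) (h11 : ∀ A B : C, in₁ A B ≫ pr₁ A B = 𝟙 B)
    {s t s' t' : R} (h : s + t = s' + t') (A B : C) :
    ((bang s).map (in₀ A B) ⊗ₘ (bang t).map (in₁ A B)) ≫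
      ((cb s t (bp A B) ≫ bc bang h (bp A B) ≫ c s' t' (bp A B)) ≫
        ((bang s').map (pr₀ A B) ⊗ₘ (bang t').map (pr₁ A B)))
    = if hst : s = s' ∧ t = t' then
        eqToHom (by rw [hst.1, hst.2]) else 0 := by
  haveI := finite_Q (R := R) s t s' t'
  rw [hmod.bimonoid s t s' t' h (bp A B), fsum_comp, comp_fsum]
  by_cases hst : s = s' ∧ t = t'
  · obtain ⟨hs, ht⟩ := hst
    subst hs ht
    rw [dif_pos ⟨rfl, rfl⟩, eqToHom_self]
    rw [finsum_eq_single _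
      (⟨((s, 0), (0, t)), add_zero s, zero_add t, add_zero s, zero_add t⟩ :
        {q : (R × R) × (R × R) // q.1.1 + q.1.2 = s ∧ q.2.1 + q.2.2 = t ∧
          q.1.1 + q.2.1 = s ∧ q.1.2 + q.2.2 = t})]
    · exact key_term_id bang p c d w cb wb bp pr₀ pr₁ in₀ in₁ hmod h00 h01 h10 h11 s t A B
        (add_zero s) (zero_add t) (add_zero s) (zero_add t)
    · rintro ⟨⟨⟨a, b⟩, ⟨e, f⟩⟩, h1, h2, h3, h4⟩ hx
      refine key_term_zero bang p c d w cb wb bp pr₀ pr₁ in₀ in₁ hmod h00 h01 h10 h11 A B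
        a b e f h1 h2 h3 h4 ?_
      rintro ⟨rfl, rfl⟩
      exact hx (Subtype.ext (by
        simp only [add_zero] at h1
        simp only [zero_add] at h2
        subst h1 h2
        rfl))
  · rw [dif_neg hst]
    apply finsum_eq_zero_of_forall_eq_zero
    rintro ⟨⟨⟨a, b⟩, ⟨e, f⟩⟩, h1, h2, h3, h4⟩
    refine key_term_zero bang p c d w cb wb bp pr₀ pr₁ in₀ in₁ hmod h00 h01 h10 h11 A B
      a b e f h1 h2 h3 h4 ?_
    rintro ⟨rfl, rfl⟩
    refine hst ⟨?_, ?_⟩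
    · rw [← h3, ← h1]
    · rw [← h4, ← h2]

lemma bc_bc_assoc (bang : R → C ⥤ C) {r s t : R} (h : r = s) (h' : s = t) (A : C)
    {X : C} (k : (bang t).obj A ⟶ X) :
    bc bang h A ≫ bc bang h' A ≫ k = bc bang (h.trans h') A ≫ k := by
  rw [← Category.assoc, bc_bc]

variable (bb : R → C → C → C)
    (P : ∀ (r : R) (A B : C) (x : {q : R × R // q.1 + q.2 = r}),
      bb r A B ⟶ (bang x.1.1).obj A ⊗ (bang x.1.2).obj B)
    (J : ∀ (r : R) (A B : C) (x : {q : R × R // q.1 + q.2 = r}),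
      (bang x.1.1).obj A ⊗ (bang x.1.2).obj B ⟶ bb r A B)

lemma collapse
    (hmod : IsGradedAdditiveBialgebraModality bang p c d w cb wb)
    (h00 : ∀ A B : C, in₀ A B ≫ pr₀ A B = 𝟙 A) (h01 : ∀ A B : C, in₀ A B ≫ pr₁ A B = 0)
    (h10 : ∀ A B : C, in₁ A B ≫ pr₀ A B = 0) (h11 : ∀ A B : C, in₁ A B ≫ pr₁ A B = 𝟙 B)
    (r : R) (A B : C) (x y : {q : R × R // q.1 + q.2 = r}) :
    (P r A B x ≫ ((bang x.1.1).map (in₀ A B) ⊗ₘ (bang x.1.2).map (in₁ A B)) ≫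
        cb x.1.1 x.1.2 (bp A B) ≫ bc bang x.2 (bp A B)) ≫
      (bc bang y.2.symm (bp A B) ≫ c y.1.1 y.1.2 (bp A B) ≫
        ((bang y.1.1).map (pr₀ A B) ⊗ₘ (bang y.1.2).map (pr₁ A B)) ≫ J r A B y)
    = if x = y then P r A B x ≫ J r A B x else 0 := by
  have hgrp : (P r A B x ≫ ((bang x.1.1).map (in₀ A B) ⊗ₘ (bang x.1.2).map (in₁ A B)) ≫
        cb x.1.1 x.1.2 (bp A B) ≫ bc bang x.2 (bp A B)) ≫
      (bc bang y.2.symm (bp A B) ≫ c y.1.1 y.1.2 (bp A B) ≫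
        ((bang y.1.1).map (pr₀ A B) ⊗ₘ (bang y.1.2).map (pr₁ A B)) ≫ J r A B y)
      = P r A B x ≫
        (((bang x.1.1).map (in₀ A B) ⊗ₘ (bang x.1.2).map (in₁ A B)) ≫
          ((cb x.1.1 x.1.2 (bp A B) ≫ bc bang (x.2.trans y.2.symm) (bp A B) ≫
              c y.1.1 y.1.2 (bp A B)) ≫
            ((bang y.1.1).map (pr₀ A B) ⊗ₘ (bang y.1.2).map (pr₁ A B)))) ≫
        J r A B y := by
    simp only [Category.assoc]
    rw [bc_bc_assoc]
  rw [hgrp, seely_key bang p c d w cb wb bp pr₀ pr₁ in₀ in₁ hmod h00 h01 h10 h11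
    (x.2.trans y.2.symm) A B]
  by_cases hxy : x = y
  · subst hxy
    rw [if_pos rfl, dif_pos ⟨rfl, rfl⟩, eqToHom_self, Category.id_comp]
  · rw [if_neg hxy, dif_neg (fun hc => hxy (Subtype.ext (Prod.ext hc.1 hc.2)))]
    rw [AdditiveMonoidal.zero_comp, AdditiveMonoidal.comp_zero]

lemma inv_comp_map
    (hmod : IsGradedAdditiveBialgebraModality bang p c d w cb wb)
    (h00 : ∀ A B : C, in₀ A B ≫ pr₀ A B = 𝟙 A) (h01 : ∀ A B : C, in₀ A B ≫ pr₁ A B = 0)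
    (h10 : ∀ A B : C, in₁ A B ≫ pr₀ A B = 0) (h11 : ∀ A B : C, in₁ A B ≫ pr₁ A B = 𝟙 B)
    (hPJ : ∀ (r : R) (A B : C),
      ∑ᶠ (x : {q : R × R // q.1 + q.2 = r}), P r A B x ≫ J r A B x = 𝟙 (bb r A B))
    (r : R) (A B : C) :
    seelyInv bang cb bp in₀ in₁ bb P r A B ≫ seelyMap bang c bp pr₀ pr₁ bb J r A B
      = 𝟙 (bb r A B) := by
  haveI : Finite {q : R × R // q.1 + q.2 = r} := finite_antidiag r
  rw [seelyInv, seelyMap, fsum_comp]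
  calc _ = ∑ᶠ (x : {q : R × R // q.1 + q.2 = r}), P r A B x ≫ J r A B x := by
        refine finsum_congr fun x => ?_
        rw [comp_fsum]
        refine Eq.trans (finsum_congr fun y =>
          collapse bang p c d w cb wb bp pr₀ pr₁ in₀ in₁ bb P J hmod h00 h01 h10 h11
            r A B x y) ?_
        rw [finsum_eq_single _ x (fun y hy => if_neg fun hc => hy hc.symm)]
        rw [if_pos rfl]
    _ = 𝟙 (bb r A B) := hPJ r A B

lemma collapse2
    (hJP : ∀ (r : R) (A B : C) (x y : {q : R × R // q.1 + q.2 = r}),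
      J r A B x ≫ P r A B y = if hxy : x = y then eqToHom (by rw [hxy]) else 0)
    (r : R) (A B : C) (x y : {q : R × R // q.1 + q.2 = r}) :
    (bc bang x.2.symm (bp A B) ≫ c x.1.1 x.1.2 (bp A B) ≫
        ((bang x.1.1).map (pr₀ A B) ⊗ₘ (bang x.1.2).map (pr₁ A B)) ≫ J r A B x) ≫
      (P r A B y ≫ ((bang y.1.1).map (in₀ A B) ⊗ₘ (bang y.1.2).map (in₁ A B)) ≫
        cb y.1.1 y.1.2 (bp A B) ≫ bc bang y.2 (bp A B))
    = if x = y then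
        bc bang x.2.symm (bp A B) ≫ c x.1.1 x.1.2 (bp A B) ≫
          ((bang x.1.1).map (pr₀ A B ≫ in₀ A B) ⊗ₘ (bang x.1.2).map (pr₁ A B ≫ in₁ A B)) ≫
          cb x.1.1 x.1.2 (bp A B) ≫ bc bang x.2 (bp A B)
      else 0 := by
  by_cases h : x = y
  · subst h
    have hid : J r A B x ≫ P r A B x = 𝟙 _ := by
      rw [hJP r A B x x, dif_pos rfl, eqToHom_self]
    have h2 : ∀ {X : C} (k : (bang x.1.1).obj A ⊗ (bang x.1.2).obj B ⟶ X),
        J r A B x ≫ P r A B x ≫ k = k := fun k => by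
      rw [← Category.assoc, hid, Category.id_comp]
    rw [if_pos rfl]
    simp only [Category.assoc]
    rw [h2]
    simp only [tensorHom_comp_tensorHom_assoc, ← Functor.map_comp]
  · have h0 : J r A B x ≫ P r A B y = 0 := by rw [hJP r A B x y, dif_neg h]
    have h2 : ∀ {X : C} (k : (bang y.1.1).obj A ⊗ (bang y.1.2).obj B ⟶ X),
        J r A B x ≫ P r A B y ≫ k = 0 := fun k => by
      rw [← Category.assoc, h0, AdditiveMonoidal.zero_comp]
    rw [if_neg h]
    simp only [Category.assoc]
    rw [h2]
    simp only [AdditiveMonoidal.comp_zero]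

lemma seely_map_inv
    (hmod : IsGradedAdditiveBialgebraModality bang p c d w cb wb)
    (hbp : ∀ A B : C, pr₀ A B ≫ in₀ A B + pr₁ A B ≫ in₁ A B = 𝟙 (bp A B))
    (hJP : ∀ (r : R) (A B : C) (x y : {q : R × R // q.1 + q.2 = r}),
      J r A B x ≫ P r A B y = if hxy : x = y then eqToHom (by rw [hxy]) else 0)
    (r : R) (A B : C) :
    seelyMap bang c bp pr₀ pr₁ bb J r A B ≫ seelyInv bang cb bp in₀ in₁ bb P r A B
      = 𝟙 ((bang r).obj (bp A B)) := by
  haveI : Finite {q : R × R // q.1 + q.2 = r} := finite_antidiag r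
  rw [seelyMap, seelyInv, fsum_comp]
  calc _ = ∑ᶠ (x : {q : R × R // q.1 + q.2 = r}),
        bc bang x.2.symm (bp A B) ≫ c x.1.1 x.1.2 (bp A B) ≫
          ((bang x.1.1).map (pr₀ A B ≫ in₀ A B) ⊗ₘ (bang x.1.2).map (pr₁ A B ≫ in₁ A B)) ≫
          cb x.1.1 x.1.2 (bp A B) ≫ bc bang x.2 (bp A B) := by
        refine finsum_congr fun x => ?_
        rw [comp_fsum]
        refine Eq.trans (finsum_congr fun y =>
          collapse2 bang c cb bp pr₀ pr₁ in₀ in₁ bb P J hJP r A B x y) ?_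
        rw [finsum_eq_single _ x (fun y hy => if_neg fun hc => hy hc.symm)]
        rw [if_pos rfl]
    _ = (bang r).map (pr₀ A B ≫ in₀ A B + pr₁ A B ≫ in₁ A B) :=
        (hmod.map_add r (pr₀ A B ≫ in₀ A B) (pr₁ A B ≫ in₁ A B)).symm
    _ = 𝟙 ((bang r).obj (bp A B)) := by rw [hbp, CategoryTheory.Functor.map_id]

lemma collapse3
    (hmod : IsGradedAdditiveBialgebraModality bang p c d w cb wb)
    (h00 : ∀ A B : C, in₀ A B ≫ pr₀ A B = 𝟙 A) (h01 : ∀ A B : C, in₀ A B ≫ pr₁ A B = 0)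
    (h10 : ∀ A B : C, in₁ A B ≫ pr₀ A B = 0) (h11 : ∀ A B : C, in₁ A B ≫ pr₁ A B = 𝟙 B)
    (r : R) {A A' B B' : C} (f : A ⟶ A') (g : B ⟶ B')
    (x y : {q : R × R // q.1 + q.2 = r}) :
    (bc bang x.2.symm (bp A B) ≫ c x.1.1 x.1.2 (bp A B) ≫
        ((bang x.1.1).map (pr₀ A B ≫ f ≫ in₀ A' B') ⊗ₘ
          (bang x.1.2).map (pr₁ A B ≫ g ≫ in₁ A' B')) ≫
        cb x.1.1 x.1.2 (bp A' B') ≫ bc bang x.2 (bp A' B')) ≫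
      (bc bang y.2.symm (bp A' B') ≫ c y.1.1 y.1.2 (bp A' B') ≫
        ((bang y.1.1).map (pr₀ A' B') ⊗ₘ (bang y.1.2).map (pr₁ A' B')) ≫ J r A' B' y)
    = if x = y then
        bc bang x.2.symm (bp A B) ≫ c x.1.1 x.1.2 (bp A B) ≫
          ((bang x.1.1).map (pr₀ A B ≫ f) ⊗ₘ (bang x.1.2).map (pr₁ A B ≫ g)) ≫ J r A' B' x
      else 0 := by
  have hsplit : ((bang x.1.1).map (pr₀ A B ≫ f ≫ in₀ A' B') ⊗ₘ
        (bang x.1.2).map (pr₁ A B ≫ g ≫ in₁ A' B'))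
      = ((bang x.1.1).map (pr₀ A B ≫ f) ⊗ₘ (bang x.1.2).map (pr₁ A B ≫ g)) ≫
        ((bang x.1.1).map (in₀ A' B') ⊗ₘ (bang x.1.2).map (in₁ A' B')) := by
    rw [tensorHom_comp_tensorHom, ← Functor.map_comp, ← Functor.map_comp, Category.assoc, Category.assoc]
  rw [hsplit]
  have hgrp : (bc bang x.2.symm (bp A B) ≫ c x.1.1 x.1.2 (bp A B) ≫
      (((bang x.1.1).map (pr₀ A B ≫ f) ⊗ₘ (bang x.1.2).map (pr₁ A B ≫ g)) ≫
        ((bang x.1.1).map (in₀ A' B') ⊗ₘ (bang x.1.2).map (in₁ A' B'))) ≫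
      cb x.1.1 x.1.2 (bp A' B') ≫ bc bang x.2 (bp A' B')) ≫
    (bc bang y.2.symm (bp A' B') ≫ c y.1.1 y.1.2 (bp A' B') ≫
      ((bang y.1.1).map (pr₀ A' B') ⊗ₘ (bang y.1.2).map (pr₁ A' B')) ≫ J r A' B' y)
    = bc bang x.2.symm (bp A B) ≫ c x.1.1 x.1.2 (bp A B) ≫
      ((bang x.1.1).map (pr₀ A B ≫ f) ⊗ₘ (bang x.1.2).map (pr₁ A B ≫ g)) ≫
      (((bang x.1.1).map (in₀ A' B') ⊗ₘ (bang x.1.2).map (in₁ A' B')) ≫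
        ((cb x.1.1 x.1.2 (bp A' B') ≫ bc bang (x.2.trans y.2.symm) (bp A' B') ≫
            c y.1.1 y.1.2 (bp A' B')) ≫
          ((bang y.1.1).map (pr₀ A' B') ⊗ₘ (bang y.1.2).map (pr₁ A' B')))) ≫
      J r A' B' y := by
    simp only [Category.assoc]
    rw [bc_bc_assoc]
  rw [hgrp, seely_key bang p c d w cb wb bp pr₀ pr₁ in₀ in₁ hmod h00 h01 h10 h11
    (x.2.trans y.2.symm) A' B']
  by_cases hxy : x = y
  · subst hxy
    rw [if_pos rfl, dif_pos ⟨rfl, rfl⟩, eqToHom_self, Category.id_comp]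
  · rw [if_neg hxy, dif_neg (fun hc => hxy (Subtype.ext (Prod.ext hc.1 hc.2)))]
    simp only [AdditiveMonoidal.zero_comp, AdditiveMonoidal.comp_zero]

lemma collapse4
    (hJP : ∀ (r : R) (A B : C) (x y : {q : R × R // q.1 + q.2 = r}),
      J r A B x ≫ P r A B y = if hxy : x = y then eqToHom (by rw [hxy]) else 0)
    (r : R) {A A' B B' : C} (f : A ⟶ A') (g : B ⟶ B')
    (x y : {q : R × R // q.1 + q.2 = r}) :
    (bc bang x.2.symm (bp A B) ≫ c x.1.1 x.1.2 (bp A B) ≫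
        ((bang x.1.1).map (pr₀ A B) ⊗ₘ (bang x.1.2).map (pr₁ A B)) ≫ J r A B x) ≫
      (P r A B y ≫ ((bang y.1.1).map f ⊗ₘ (bang y.1.2).map g) ≫ J r A' B' y)
    = if x = y then
        bc bang x.2.symm (bp A B) ≫ c x.1.1 x.1.2 (bp A B) ≫
          ((bang x.1.1).map (pr₀ A B ≫ f) ⊗ₘ (bang x.1.2).map (pr₁ A B ≫ g)) ≫ J r A' B' x
      else 0 := by
  by_cases h : x = y
  · subst h
    have hid : J r A B x ≫ P r A B x = 𝟙 _ := by
      rw [hJP r A B x x, dif_pos rfl, eqToHom_self]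
    have h2 : ∀ {X : C} (k : (bang x.1.1).obj A ⊗ (bang x.1.2).obj B ⟶ X),
        J r A B x ≫ P r A B x ≫ k = k := fun k => by
      rw [← Category.assoc, hid, Category.id_comp]
    rw [if_pos rfl]
    simp only [Category.assoc]
    rw [h2]
    simp only [tensorHom_comp_tensorHom_assoc, ← Functor.map_comp]
  · have h0 : J r A B x ≫ P r A B y = 0 := by rw [hJP r A B x y, dif_neg h]
    have h2 : ∀ {X : C} (k : (bang y.1.1).obj A ⊗ (bang y.1.2).obj B ⟶ X),
        J r A B x ≫ P r A B y ≫ k = 0 := fun k => by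
      rw [← Category.assoc, h0, AdditiveMonoidal.zero_comp]
    rw [if_neg h]
    simp only [Category.assoc]
    rw [h2]
    simp only [AdditiveMonoidal.comp_zero]

lemma seely_natural
    (hmod : IsGradedAdditiveBialgebraModality bang p c d w cb wb)
    (h00 : ∀ A B : C, in₀ A B ≫ pr₀ A B = 𝟙 A) (h01 : ∀ A B : C, in₀ A B ≫ pr₁ A B = 0)
    (h10 : ∀ A B : C, in₁ A B ≫ pr₀ A B = 0) (h11 : ∀ A B : C, in₁ A B ≫ pr₁ A B = 𝟙 B)
    (hJP : ∀ (r : R) (A B : C) (x y : {q : R × R // q.1 + q.2 = r}),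
      J r A B x ≫ P r A B y = if hxy : x = y then eqToHom (by rw [hxy]) else 0)
    (r : R) {A A' B B' : C} (f : A ⟶ A') (g : B ⟶ B') :
    (bang r).map (pr₀ A B ≫ f ≫ in₀ A' B' + pr₁ A B ≫ g ≫ in₁ A' B')
        ≫ seelyMap bang c bp pr₀ pr₁ bb J r A' B'
      = seelyMap bang c bp pr₀ pr₁ bb J r A B
          ≫ ∑ᶠ (x : {q : R × R // q.1 + q.2 = r}),
              P r A B x ≫ ((bang x.1.1).map f ⊗ₘ (bang x.1.2).map g) ≫ J r A' B' x := by
  haveI : Finite {q : R × R // q.1 + q.2 = r} := finite_antidiag r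
  have hL : (bang r).map (pr₀ A B ≫ f ≫ in₀ A' B' + pr₁ A B ≫ g ≫ in₁ A' B')
        ≫ seelyMap bang c bp pr₀ pr₁ bb J r A' B'
      = ∑ᶠ (x : {q : R × R // q.1 + q.2 = r}),
          bc bang x.2.symm (bp A B) ≫ c x.1.1 x.1.2 (bp A B) ≫
            ((bang x.1.1).map (pr₀ A B ≫ f) ⊗ₘ (bang x.1.2).map (pr₁ A B ≫ g)) ≫
            J r A' B' x := by
    rw [seelyMap, hmod.map_add r, fsum_comp]
    refine finsum_congr fun x => ?_
    rw [comp_fsum]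
    refine Eq.trans (finsum_congr fun y =>
      collapse3 bang p c d w cb wb bp pr₀ pr₁ in₀ in₁ bb J hmod h00 h01 h10 h11
        r f g x y) ?_
    rw [finsum_eq_single _ x (fun y hy => if_neg fun hc => hy hc.symm)]
    rw [if_pos rfl]
  have hR : seelyMap bang c bp pr₀ pr₁ bb J r A B
          ≫ ∑ᶠ (x : {q : R × R // q.1 + q.2 = r}),
              P r A B x ≫ ((bang x.1.1).map f ⊗ₘ (bang x.1.2).map g) ≫ J r A' B' x
      = ∑ᶠ (x : {q : R × R // q.1 + q.2 = r}),
          bc bang x.2.symm (bp A B) ≫ c x.1.1 x.1.2 (bp A B) ≫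
            ((bang x.1.1).map (pr₀ A B ≫ f) ⊗ₘ (bang x.1.2).map (pr₁ A B ≫ g)) ≫
            J r A' B' x := by
    rw [seelyMap, fsum_comp]
    refine finsum_congr fun x => ?_
    rw [comp_fsum]
    refine Eq.trans (finsum_congr fun y =>
      collapse4 bang c bp pr₀ pr₁ bb P J hJP r f g x y) ?_
    rw [finsum_eq_single _ x (fun y hy => if_neg fun hc => hy hc.symm)]
    rw [if_pos rfl]
  rw [hL, hR]

end SeelyAux

/-- **The graded Seely isomorphisms.** Let `R` be a f.a.s. semiring and
`(bang, p, c, d, w, cb, wb)` an `R`-graded additive bialgebra modality on an additive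
symmetric monoidal category with finite biproducts (binary biproducts `bp` and, for each
`r`, a biproduct `bb r A B` of the family `!_s A ⊗ !_t B` indexed by `{(s,t) | s+t=r}`)
and a zero object `Z`. Then `χ⊗_r := Σ_{s+t=r} c_{s,t};(!_s(π₀)⊗!_t(π₁));ι_{s,t}` and
`χI := w : !_0 Z ⟶ I` are natural isomorphisms, with the indicated inverses. -/
theorem graded_seely_isomorphism
    {R : Type} [Semiring R] [DecidableEq R] [FAS R]
    {C : Type u} [Category.{v} C] [MonoidalCategory C] [SymmetricCategory C]
    [∀ X Y : C, AddCommMonoid (X ⟶ Y)] [AdditiveMonoidal C]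
    (bang : R → C ⥤ C)
    (p : ∀ (r s : R) (A : C), (bang (r * s)).obj A ⟶ (bang r).obj ((bang s).obj A))
    (c : ∀ (r s : R) (A : C), (bang (r + s)).obj A ⟶ (bang r).obj A ⊗ (bang s).obj A)
    (d : ∀ A : C, (bang 1).obj A ⟶ A)
    (w : ∀ A : C, (bang 0).obj A ⟶ 𝟙_ C)
    (cb : ∀ (r s : R) (A : C), (bang r).obj A ⊗ (bang s).obj A ⟶ (bang (r + s)).obj A)
    (wb : ∀ A : C, 𝟙_ C ⟶ (bang 0).obj A)
    (hmod : IsGradedAdditiveBialgebraModality bang p c d w cb wb)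
    -- binary biproducts
    (bp : C → C → C)
    (pr₀ : ∀ A B : C, bp A B ⟶ A) (pr₁ : ∀ A B : C, bp A B ⟶ B)
    (in₀ : ∀ A B : C, A ⟶ bp A B) (in₁ : ∀ A B : C, B ⟶ bp A B)
    (h00 : ∀ A B : C, in₀ A B ≫ pr₀ A B = 𝟙 A) (h01 : ∀ A B : C, in₀ A B ≫ pr₁ A B = 0)
    (h10 : ∀ A B : C, in₁ A B ≫ pr₀ A B = 0) (h11 : ∀ A B : C, in₁ A B ≫ pr₁ A B = 𝟙 B)
    (hbp : ∀ A B : C, pr₀ A B ≫ in₀ A B + pr₁ A B ≫ in₁ A B = 𝟙 (bp A B))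
    -- a zero object
    (Z : C) (hZ : Limits.IsZero Z)
    -- biproducts indexed by the antidiagonal of r
    (bb : R → C → C → C)
    (P : ∀ (r : R) (A B : C) (x : {q : R × R // q.1 + q.2 = r}),
      bb r A B ⟶ (bang x.1.1).obj A ⊗ (bang x.1.2).obj B)
    (J : ∀ (r : R) (A B : C) (x : {q : R × R // q.1 + q.2 = r}),
      (bang x.1.1).obj A ⊗ (bang x.1.2).obj B ⟶ bb r A B)
    (hJP : ∀ (r : R) (A B : C) (x y : {q : R × R // q.1 + q.2 = r}),
      J r A B x ≫ P r A B y = if hxy : x = y then eqToHom (by rw [hxy]) else 0)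
    (hPJ : ∀ (r : R) (A B : C),
      ∑ᶠ (x : {q : R × R // q.1 + q.2 = r}), P r A B x ≫ J r A B x = 𝟙 (bb r A B)) :
    -- `χ⊗_r` is an isomorphism with the indicated inverse
    (∀ (r : R) (A B : C),
      seelyMap bang c bp pr₀ pr₁ bb J r A B ≫ seelyInv bang cb bp in₀ in₁ bb P r A B
          = 𝟙 ((bang r).obj (bp A B))
        ∧ seelyInv bang cb bp in₀ in₁ bb P r A B ≫ seelyMap bang c bp pr₀ pr₁ bb J r A B
          = 𝟙 (bb r A B))
    ∧
    -- `χ⊗_r` is natural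
    (∀ (r : R) {A A' B B' : C} (f : A ⟶ A') (g : B ⟶ B'),
      (bang r).map (pr₀ A B ≫ f ≫ in₀ A' B' + pr₁ A B ≫ g ≫ in₁ A' B')
          ≫ seelyMap bang c bp pr₀ pr₁ bb J r A' B'
        = seelyMap bang c bp pr₀ pr₁ bb J r A B
            ≫ ∑ᶠ (x : {q : R × R // q.1 + q.2 = r}),
                P r A B x ≫ ((bang x.1.1).map f ⊗ₘ (bang x.1.2).map g) ≫ J r A' B' x)
    ∧
    -- `χI := w` is an isomorphism with inverse `w̄`
    (w Z ≫ wb Z = 𝟙 ((bang 0).obj Z) ∧ wb Z ≫ w Z = 𝟙 (𝟙_ C)) := by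
  refine ⟨fun r A B =>
      ⟨seely_map_inv bang p c d w cb wb bp pr₀ pr₁ in₀ in₁ bb P J hmod hbp hJP r A B,
       inv_comp_map bang p c d w cb wb bp pr₀ pr₁ in₀ in₁ bb P J hmod h00 h01 h10 h11
         hPJ r A B⟩,
    fun r {A A' B B'} f g => seely_natural bang p c d w cb wb bp pr₀ pr₁ in₀ in₁ bb P J hmod
      h00 h01 h10 h11 hJP r f g,
    ?_, hmod.wb_w Z⟩
  have h0 : (𝟙 Z : Z ⟶ Z) = 0 := hZ.eq_of_src _ _
  have hm := hmod.map_zero (0 : R) (A := Z) (B := Z)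
  rw [dif_pos rfl] at hm
  calc w Z ≫ wb Z = (bang 0).map (𝟙 Z) := by
        rw [h0, hm]
        simp only [bc_refl, Category.id_comp, Category.comp_id]
    _ = 𝟙 _ := (bang 0).map_id Z
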